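/- Generation lemma for abstractions: if Γ ⊢ λx.t : T, then there exist types T₁,…,Tₙ, R₁,…,Rₙ, unit types U₁,…,Uₙ, scalars α₁,…,αₙ and sets of type variables 𝒱₁,…,𝒱ₙ such that T ≡ Σᵢ₌₁ⁿ αᵢ·Tᵢ, Σᵢ₌₁ⁿ αᵢ = 1, and for all i ∈ {1,…,n}: Γ, x:Uᵢ ⊢ t : Rᵢ and Uᵢ→Rᵢ ⪯_{𝒱ᵢ,Γ} Tᵢ. -/

import Mathlib

/- Types of λvec_R: general types and unit types (mutual) -/
mutual
inductive UTy (S : Type) : Type where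
  | uvar : ℕ → UTy S
  | arrow : UTy S → Ty S → UTy S
  | fallU : ℕ → UTy S → UTy S
  | fallG : ℕ → UTy S → UTy S
inductive Ty (S : Type) : Type where
  | unit : UTy S → Ty S
  | smul : S → Ty S → Ty S
  | add : Ty S → Ty S → Ty S
  | gvar : ℕ → Ty S
end

/- Type equivalence: the smallest congruence with the weak-module axioms -/
mutual
inductive UEquiv {S : Type} [CommRing S] : UTy S → UTy S → Prop where
  | refl (U : UTy S) : UEquiv U U
  | symm : UEquiv U V → UEquiv V U
  | trans : UEquiv U V → UEquiv V W → UEquiv U W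
  | arrow : UEquiv U V → TEquiv T R → UEquiv (.arrow U T) (.arrow V R)
  | fallU : UEquiv U V → UEquiv (.fallU X U) (.fallU X V)
  | fallG : UEquiv U V → UEquiv (.fallG X U) (.fallG X V)
inductive TEquiv {S : Type} [CommRing S] : Ty S → Ty S → Prop where
  | refl (T : Ty S) : TEquiv T T
  | symm : TEquiv T R → TEquiv R T
  | trans : TEquiv T R → TEquiv R P → TEquiv T P
  | unit : UEquiv U V → TEquiv (.unit U) (.unit V)
  | smul : TEquiv T R → TEquiv (.smul a T) (.smul a R)
  | addL : TEquiv T R → TEquiv (.add T P) (.add R P)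
  | addR : TEquiv T R → TEquiv (.add P T) (.add P R)
  | one_smul (T : Ty S) : TEquiv (.smul 1 T) T
  | smul_smul : TEquiv (.smul a (.smul b T)) (.smul (a*b) T)
  | smul_add : TEquiv (.add (.smul a T) (.smul a R)) (.smul a (.add T R))
  | add_smul : TEquiv (.add (.smul a T) (.smul b T)) (.smul (a+b) T)
  | comm : TEquiv (.add T R) (.add R T)
  | assoc : TEquiv (.add T (.add R P)) (.add (.add T R) P)
end

/- substitution of a unit type variable by a unit type -/
mutual
def UTy.substU {S : Type} : UTy S → ℕ → UTy S → UTy S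
  | .uvar m, X, A => if m = X then A else .uvar m
  | .arrow U T, X, A => .arrow (U.substU X A) (T.substU X A)
  | .fallU m U, X, A => if m = X then .fallU m U else .fallU m (U.substU X A)
  | .fallG m U, X, A => .fallG m (U.substU X A)
def Ty.substU {S : Type} : Ty S → ℕ → UTy S → Ty S
  | .unit U, X, A => .unit (U.substU X A)
  | .smul a T, X, A => .smul a (T.substU X A)
  | .add T R, X, A => .add (T.substU X A) (R.substU X A)
  | .gvar m, _, _ => .gvar m
end

/- substitution of a general type variable by a general type -/
mutual
def UTy.substG {S : Type} : UTy S → ℕ → Ty S → UTy S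
  | .uvar m, _, _ => .uvar m
  | .arrow U T, X, A => .arrow (U.substG X A) (T.substG X A)
  | .fallU m U, X, A => .fallU m (U.substG X A)
  | .fallG m U, X, A => if m = X then .fallG m U else .fallG m (U.substG X A)
def Ty.substG {S : Type} : Ty S → ℕ → Ty S → Ty S
  | .unit U, X, A => .unit (U.substG X A)
  | .smul a T, X, A => .smul a (T.substG X A)
  | .add T R, X, A => .add (T.substG X A) (R.substG X A)
  | .gvar m, X, A => if m = X then A else .gvar m
end

/- free type variables; a variable is (false, n) for a unit variable X_n
   and (true, n) for a general variable 𝕏_n -/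
mutual
def UTy.fv {S : Type} : UTy S → Set (Bool × ℕ)
  | .uvar n => {(false, n)}
  | .arrow U T => U.fv ∪ T.fv
  | .fallU n U => U.fv \ {(false, n)}
  | .fallG n U => U.fv \ {(true, n)}
def Ty.fv {S : Type} : Ty S → Set (Bool × ℕ)
  | .unit U => U.fv
  | .smul _ T => T.fv
  | .add T R => T.fv ∪ R.fv
  | .gvar n => {(true, n)}
end
/- a single substitution item: a type variable together with a type of the matching kind -/
inductive TSub (S : Type) : Type where
  | u : ℕ → UTy S → TSub S
  | g : ℕ → Ty S → TSub S

def TSub.var {S : Type} : TSub S → Bool × ℕ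
  | .u X _ => (false, X)
  | .g X _ => (true, X)

def Ty.applySub {S : Type} : Ty S → TSub S → Ty S
  | T, .u X A => T.substU X A
  | T, .g X A => T.substG X A

def UTy.applySub {S : Type} : UTy S → TSub S → UTy S
  | U, .u X A => U.substU X A
  | U, .g X A => U.substG X A

def Ty.applySubs {S : Type} (T : Ty S) (σ : List (TSub S)) : Ty S := σ.foldl Ty.applySub T
def UTy.applySubs {S : Type} (U : UTy S) (σ : List (TSub S)) : UTy S := σ.foldl UTy.applySub U

/- ∀X.U for a variable of either kind, and iterated foralls -/
def mkForall {S : Type} (X : Bool × ℕ) (U : UTy S) : UTy S :=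
  if X.1 then .fallG X.2 U else .fallU X.2 U
def mkForalls {S : Type} (Xs : List (Bool × ℕ)) (U : UTy S) : UTy S := Xs.foldr mkForall U

/- the linear combination Σᵢ αᵢ·Tᵢ represented by a (nonempty) list of pairs -/
def combo {S : Type} : List (S × Ty S) → Ty S
  | [] => .gvar 0
  | [p] => .smul p.1 p.2
  | p :: q :: L => .add (.smul p.1 p.2) (combo (q :: L))

/- sum of the scalars of a linear combination -/
def weightOf {S : Type} [CommRing S] {α : Type} (L : List (S × α)) : S := (L.map Prod.fst).sum

/- Terms of λvec_R -/
inductive Term (S : Type) : Type where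
  | var : ℕ → Term S
  | lam : ℕ → Term S → Term S
  | app : Term S → Term S → Term S
  | smul : S → Term S → Term S
  | add : Term S → Term S → Term S

/- basis terms: variables and abstractions -/
inductive IsBasis {S : Type} : Term S → Prop where
  | var : IsBasis (.var x)
  | lam : IsBasis (.lam x t)

def Term.fv {S : Type} : Term S → Set ℕ
  | .var x => {x}
  | .lam x t => t.fv \ {x}
  | .app t r => t.fv ∪ r.fv
  | .smul _ t => t.fv
  | .add t r => t.fv ∪ r.fv

/- term substitution t[b/x] -/
def Term.subst {S : Type} : Term S → ℕ → Term S → Term S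
  | .var y, x, b => if y = x then b else .var y
  | .lam y t, x, b => if y = x then .lam y t else .lam y (t.subst x b)
  | .app t r, x, b => .app (t.subst x b) (r.subst x b)
  | .smul a t, x, b => .smul a (t.subst x b)
  | .add t r, x, b => .add (t.subst x b) (r.subst x b)

/- typing contexts: partial maps from term variables to unit types -/
def Ctx (S : Type) : Type := ℕ → Option (UTy S)

def Ctx.update {S : Type} (Γ : Ctx S) (x : ℕ) (U : UTy S) : Ctx S :=
  fun y => if y = x then some U else Γ y

def Ctx.fv {S : Type} (Γ : Ctx S) : Set (Bool × ℕ) :=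
  {v | ∃ x U, Γ x = some U ∧ v ∈ UTy.fv U}

def Ctx.applySub {S : Type} (Γ : Ctx S) (s : TSub S) : Ctx S :=
  fun x => (Γ x).map (fun U => U.applySub s)
/- Sized typing judgement: `TypesN n Γ t T` means Γ ⊢ t : T has a derivation
   with n sequents. -/
inductive TypesN {S : Type} [CommRing S] : ℕ → Ctx S → Term S → Ty S → Prop where
  | ax : Γ x = some U → TypesN 1 Γ (.var x) (.unit U)
  | equiv : TypesN n Γ t T → TEquiv T R → TypesN (n+1) Γ t R
  | arrI : TypesN n (Γ.update x U) t T → TypesN (n+1) Γ (.lam x t) (.unit (.arrow U T))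
  | arrE (Xs : List (Bool × ℕ)) (U : UTy S) (L : List (S × Ty S)) (M : List (S × List (TSub S))) :
      L ≠ [] → M ≠ [] →
      (∀ q ∈ M, q.2.map TSub.var = Xs) →
      TypesN n Γ t (combo (L.map fun p => (p.1, Ty.unit (mkForalls Xs (.arrow U p.2))))) →
      TypesN m Γ r (combo (M.map fun q => (q.1, (Ty.unit U).applySubs q.2))) →
      TypesN (n+m+1) Γ (.app t r)
        (combo (L.flatMap fun p => M.map fun q => (p.1 * q.1, p.2.applySubs q.2)))
  | fallI (L : List (S × UTy S)) (X : Bool × ℕ) :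
      L ≠ [] → X ∉ Γ.fv →
      TypesN n Γ t (combo (L.map fun p => (p.1, Ty.unit p.2))) →
      TypesN (n+1) Γ t (combo (L.map fun p => (p.1, Ty.unit (mkForall X p.2))))
  | fallE (L : List (S × UTy S)) (s : TSub S) :
      L ≠ [] →
      TypesN n Γ t (combo (L.map fun p => (p.1, Ty.unit (mkForall s.var p.2)))) →
      TypesN (n+1) Γ t (combo (L.map fun p => (p.1, (Ty.unit p.2).applySub s)))
  | addI : TypesN n Γ t T → TypesN m Γ r R → TypesN (n+m+1) Γ (.add t r) (.add T R)
  | oneE : TypesN n Γ (.smul 1 t) T → TypesN (n+1) Γ t T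
  | sum (L : List (ℕ × S × Ty S)) :
      L ≠ [] →
      (∀ p ∈ L, TypesN p.1 Γ t p.2.2) →
      TypesN ((L.map Prod.fst).sum + 1) Γ (.smul (weightOf (L.map Prod.snd)) t)
        (combo (L.map Prod.snd))

/- the typing judgement Γ ⊢ t : T -/
def Types {S : Type} [CommRing S] (Γ : Ctx S) (t : Term S) (T : Ty S) : Prop :=
  ∃ n, TypesN n Γ t T

/- the relation ≺_{X,Γ} -/
inductive Prec {S : Type} [CommRing S] (Γ : Ctx S) : (Bool × ℕ) → Ty S → Ty S → Prop where
  | intro (X : Bool × ℕ) (L : List (S × UTy S)) :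
      X ∉ Γ.fv → L ≠ [] →
      TEquiv R (combo (L.map fun p => (p.1, Ty.unit p.2))) →
      TEquiv T (combo (L.map fun p => (p.1, Ty.unit (mkForall X p.2)))) →
      Prec Γ X R T
  | elim (s : TSub S) (L : List (S × UTy S)) :
      s.var ∉ Γ.fv → L ≠ [] →
      TEquiv R (combo (L.map fun p => (p.1, Ty.unit (mkForall s.var p.2)))) →
      TEquiv T (combo (L.map fun p => (p.1, (Ty.unit p.2).applySub s))) →
      Prec Γ s.var R T

/- the relation ⪯_{𝒱,Γ} -/
inductive Preceq {S : Type} [CommRing S] (Γ : Ctx S) : Set (Bool × ℕ) → Ty S → Ty S → Prop where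
  | prec : V ∩ Γ.fv = ∅ → Prec Γ X R T → Preceq Γ (V ∪ {X}) R T
  | trans : Preceq Γ V₁ A B → Preceq Γ V₂ B C → Preceq Γ (V₁ ∪ V₂) A C
  | equiv : V ∩ Γ.fv = ∅ → TEquiv R T → Preceq Γ V R T

/- the reduction relation → -/
inductive Step {S : Type} [CommRing S] : Term S → Term S → Prop where
  -- Group E
  | oneSmul : Step (.smul 1 t) t
  | smulSmul : Step (.smul a (.smul b t)) (.smul (a*b) t)
  | smulAdd : Step (.smul a (.add t r)) (.add (.smul a t) (.smul a r))
  -- Group F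
  | factor : Step (.add (.smul a t) (.smul b t)) (.smul (a+b) t)
  | factorOne : Step (.add (.smul a t) t) (.smul (a+1) t)
  | factorNone : Step (.add t t) (.smul (1+1) t)
  -- Group B
  | beta : IsBasis b → Step (.app (.lam x t) b) (t.subst x b)
  -- Group A
  | appAddL : Step (.app (.add t r) u) (.add (.app t u) (.app r u))
  | appAddR : Step (.app t (.add r u)) (.add (.app t r) (.app t u))
  | appSmulL : Step (.app (.smul a t) r) (.smul a (.app t r))
  | appSmulR : Step (.app t (.smul a r)) (.smul a (.app t r))
  -- contextual rules
  | ctxSmul : Step t r → Step (.smul a t) (.smul a r)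
  | ctxAddR : Step t r → Step (.add u t) (.add u r)
  | ctxAppR : Step t r → Step (.app u t) (.app u r)
  | ctxAppL : Step t r → Step (.app t u) (.app r u)
  | ctxLam : Step t r → Step (.lam x t) (.lam x r)

/- values: sums (in any association) of pairwise-distinct abstractions, possibly scaled -/
inductive SumOf {S : Type} : Term S → List (Term S) → Prop where
  | leaf (t : Term S) : SumOf t [t]
  | add : SumOf t L → SumOf r M → SumOf (.add t r) (L ++ M)

inductive VEntry {S : Type} : Term S → Prop where
  | lam : VEntry (.lam x t)
  | smul : VEntry (.smul a (.lam x t))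

def lamOf {S : Type} : Term S → Term S
  | .smul _ b => b
  | b => b

def IsValue {S : Type} (t : Term S) : Prop :=
  ∃ L : List (Term S), SumOf t L ∧ (∀ e ∈ L, VEntry e) ∧ (L.map lamOf).Pairwise (· ≠ ·)

/- weight of types and of terms -/
def Ty.weight {S : Type} [CommRing S] : Ty S → S
  | .unit _ => 1
  | .gvar _ => 1
  | .smul a T => a * T.weight
  | .add T R => T.weight + R.weight

def Term.weight {S : Type} [CommRing S] : Term S → S
  | .var _ => 1
  | .lam _ _ => 1
  | .app _ _ => 1
  | .smul a t => a * t.weight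
  | .add t r => t.weight + r.weight
theorem weight_tequiv {S : Type} [CommRing S] {T R : Ty S} (h : TEquiv T R) : T.weight = R.weight := by
  refine @TEquiv.rec S _ (fun _ _ _ => True) (fun T R _ => T.weight = R.weight)
    ?_ ?_ ?_ ?_ ?_ ?_ ?_ ?_ ?_ ?_ ?_ ?_ ?_ ?_ ?_ ?_ ?_ ?_ ?_ _ _ h <;>
  intros <;> simp_all [Ty.weight] <;> ring
def uSetoid (S : Type) [CommRing S] : Setoid (UTy S) :=
  ⟨UEquiv, ⟨UEquiv.refl, UEquiv.symm, UEquiv.trans⟩⟩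

abbrev UQ (S : Type) [CommRing S] := Quotient (uSetoid S)
abbrev Atom (S : Type) [CommRing S] := UQ S ⊕ ℕ

def uq {S : Type} [CommRing S] (U : UTy S) : UQ S := Quotient.mk (uSetoid S) U

def omerge {S : Type} [Add S] : Option S → Option S → Option S
  | none, y => y
  | some x, none => some x
  | some x, some y => some (x + y)

open Classical in
noncomputable def NF {S : Type} [CommRing S] : Ty S → Atom S → Option S
  | .unit U => fun a => if a = Sum.inl (uq U) then some 1 else none
  | .gvar n => fun a => if a = Sum.inr n then some 1 else none
  | .smul c T => fun a => (NF T a).map (c * ·)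
  | .add T R => fun a => omerge (NF T a) (NF R a)

theorem omerge_comm {S : Type} [CommRing S] (x y : Option S) : omerge x y = omerge y x := by
  cases x <;> cases y <;> simp [omerge, add_comm]

theorem omerge_assoc {S : Type} [CommRing S] (x y z : Option S) :
    omerge x (omerge y z) = omerge (omerge x y) z := by
  cases x <;> cases y <;> cases z <;> simp [omerge, add_assoc]

theorem omerge_eq_none {S : Type} [Add S] (x y : Option S) :
    omerge x y = none ↔ x = none ∧ y = none := by
  cases x <;> cases y <;> simp [omerge]

theorem nf_sound {S : Type} [CommRing S] {T R : Ty S} (h : TEquiv T R) : NF T = NF R := by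
  refine @TEquiv.rec S _ (fun U V _ => uq U = uq V) (fun T R _ => NF T = NF R)
    ?_ ?_ ?_ ?_ ?_ ?_ ?_ ?_ ?_ ?_ ?_ ?_ ?_ ?_ ?_ ?_ ?_ ?_ ?_ _ _ h
  · intro U; rfl
  · intro U V a ih; exact ih.symm
  · intro U V W a b ih1 ih2; exact ih1.trans ih2
  · intro U V T R a b _ _; exact Quotient.sound (UEquiv.arrow a b)
  · intro U V X a _; exact Quotient.sound (UEquiv.fallU a)
  · intro U V X a _; exact Quotient.sound (UEquiv.fallG a)
  · intro T; rfl
  · intro T R a ih; exact ih.symm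
  · intro T R P a b ih1 ih2; exact ih1.trans ih2
  · intro U V a ih; funext x; simp only [NF]; rw [ih]
  · intro T R a h ih; funext x; simp [NF, ih]
  · intro T R P a ih; funext x; simp [NF, ih]
  · intro T R P a ih; funext x; simp [NF, ih]
  · intro T; funext x; simp [NF]
  · intro a b T; funext x; simp only [NF]; cases NF T x <;> simp [mul_assoc]
  · intro a T R; funext x; simp only [NF]; cases NF T x <;> cases NF R x <;> simp [omerge, mul_add]
  · intro a T b; funext x; simp only [NF]; cases NF T x <;> simp [omerge, add_mul]
  · intro T R; funext x; simp [NF, omerge_comm]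
  · intro T R P; funext x; simp [NF, omerge_assoc]
theorem combo_cons {S : Type} (p : S × Ty S) (L : List (S × Ty S)) (h : L ≠ []) :
    combo (p :: L) = .add (.smul p.1 p.2) (combo L) := by
  cases L with
  | nil => exact absurd rfl h
  | cons q M => rfl

theorem tequiv_add_congr {S : Type} [CommRing S] {A B C D : Ty S}
    (h1 : TEquiv A B) (h2 : TEquiv C D) : TEquiv (.add A C) (.add B D) :=
  (TEquiv.addL h1).trans (TEquiv.addR h2)

theorem tequiv_combo_append {S : Type} [CommRing S] (A B : List (S × Ty S))
    (hA : A ≠ []) (hB : B ≠ []) : TEquiv (combo (A ++ B)) (.add (combo A) (combo B)) := by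
  induction A with
  | nil => exact absurd rfl hA
  | cons p A' ih =>
    cases A' with
    | nil => rw [List.singleton_append, combo_cons p B hB]; exact TEquiv.refl _
    | cons q M =>
      rw [List.cons_append, combo_cons p ((q :: M) ++ B) (by simp), combo_cons p (q :: M) (by simp)]
      exact ((TEquiv.addR (ih (by simp))).trans TEquiv.assoc)

theorem tequiv_combo_smul {S : Type} [CommRing S] (a : S) (L : List (S × Ty S)) (h : L ≠ []) :
    TEquiv (combo (L.map fun p => (a * p.1, p.2))) (.smul a (combo L)) := by
  induction L with
  | nil => exact absurd rfl h
  | cons p L' ih =>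
    cases L' with
    | nil => exact TEquiv.symm TEquiv.smul_smul
    | cons q M =>
      rw [List.map_cons, combo_cons p (q :: M) (by simp),
        combo_cons (a * p.1, p.2) (((q :: M)).map fun p => (a * p.1, p.2)) (by simp)]
      exact (tequiv_add_congr (TEquiv.symm TEquiv.smul_smul) (ih (by simp))).trans TEquiv.smul_add

theorem weightOf_cons {S : Type} [CommRing S] (p : S × Ty S) (L : List (S × Ty S)) :
    weightOf (p :: L) = p.1 + weightOf L := by simp [weightOf]

theorem weightOf_append {S : Type} [CommRing S] (A B : List (S × Ty S)) :
    weightOf (A ++ B) = weightOf A + weightOf B := by simp [weightOf]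

theorem weight_combo {S : Type} [CommRing S] (L : List (S × Ty S)) (h : L ≠ []) :
    (combo L).weight = (L.map fun p => p.1 * p.2.weight).sum := by
  induction L with
  | nil => exact absurd rfl h
  | cons p L' ih =>
    cases L' with
    | nil => simp [combo, Ty.weight]
    | cons q M =>
      rw [combo_cons p (q :: M) (by simp)]
      simp only [List.map_cons, List.sum_cons, Ty.weight, ih (by simp)]

theorem nf_mem_ne_none {S : Type} [CommRing S] (M : List (S × UTy S)) (p : S × UTy S)
    (hm : p ∈ M) : NF (combo (M.map fun q => (q.1, Ty.unit q.2))) (Sum.inl (uq p.2)) ≠ none := by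
  induction M with
  | nil => simp at hm
  | cons q M' ih =>
    cases M' with
    | nil =>
      simp at hm; subst hm
      simp [combo, NF]
    | cons r M'' =>
      rw [List.map_cons, combo_cons _ _ (by simp)]
      simp only [NF, ne_eq, omerge_eq_none, not_and]
      rcases List.mem_cons.mp hm with h | h
      · subst h; intro hc; simp [NF] at hc
      · intro _; exact ih h

theorem nf_combo_none_ex {S : Type} [CommRing S] (L : List (S × Ty S)) (h : L ≠ [])
    (a : Atom S) (hn : NF (combo L) a ≠ none) : ∃ q ∈ L, NF q.2 a ≠ none := by
  induction L with
  | nil => exact absurd rfl h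
  | cons p L' ih =>
    cases L' with
    | nil =>
      refine ⟨p, by simp, ?_⟩
      simp only [combo, NF] at hn
      intro hc; rw [hc] at hn; simp at hn
    | cons q M =>
      rw [combo_cons p (q :: M) (by simp)] at hn
      simp only [NF, ne_eq, omerge_eq_none, not_and] at hn
      by_cases h1 : NF p.2 a = none
      · have h2 : NF (combo (q :: M)) a ≠ none := by
          by_cases h3 : (NF p.2 a).map (p.1 * ·) = none
          · exact hn h3
          · exact absurd (by rw [h1]; rfl) h3
        obtain ⟨r, hr, hrn⟩ := ih (by simp) h2
        exact ⟨r, by simp [hr], hrn⟩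
      · exact ⟨p, by simp, h1⟩

theorem nf_unit_eq {S : Type} [CommRing S] (W : UTy S) (a : Atom S)
    (h : NF (Ty.unit W) a ≠ none) : a = Sum.inl (uq W) := by
  simp only [NF] at h
  by_contra hc
  rw [if_neg hc] at h
  exact h rfl
def FallInv {S : Type} [CommRing S] (U V : UTy S) : Prop :=
  (∀ X A, U = .fallU X A → ∃ B, V = .fallU X B ∧ UEquiv A B) ∧
  (∀ X A, U = .fallG X A → ∃ B, V = .fallG X B ∧ UEquiv A B)

theorem uequiv_fall_inv {S : Type} [CommRing S] {U V : UTy S} (h : UEquiv U V) :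
    FallInv U V ∧ FallInv V U := by
  refine @UEquiv.rec S _ (fun U V _ => FallInv U V ∧ FallInv V U) (fun _ _ _ => True)
    ?_ ?_ ?_ ?_ ?_ ?_ ?_ ?_ ?_ ?_ ?_ ?_ ?_ ?_ ?_ ?_ ?_ ?_ ?_ _ _ h
  · intro U
    exact ⟨⟨fun X A hA => ⟨A, hA, UEquiv.refl A⟩, fun X A hA => ⟨A, hA, UEquiv.refl A⟩⟩,
           ⟨fun X A hA => ⟨A, hA, UEquiv.refl A⟩, fun X A hA => ⟨A, hA, UEquiv.refl A⟩⟩⟩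
  · intro U V a ih; exact ⟨ih.2, ih.1⟩
  · intro U V W a b ih1 ih2
    constructor
    · constructor
      · intro X A hA
        obtain ⟨B, hB, hAB⟩ := ih1.1.1 X A hA
        obtain ⟨C, hC, hBC⟩ := ih2.1.1 X B hB
        exact ⟨C, hC, hAB.trans hBC⟩
      · intro X A hA
        obtain ⟨B, hB, hAB⟩ := ih1.1.2 X A hA
        obtain ⟨C, hC, hBC⟩ := ih2.1.2 X B hB
        exact ⟨C, hC, hAB.trans hBC⟩
    · constructor
      · intro X A hA
        obtain ⟨B, hB, hAB⟩ := ih2.2.1 X A hA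
        obtain ⟨C, hC, hBC⟩ := ih1.2.1 X B hB
        exact ⟨C, hC, hAB.trans hBC⟩
      · intro X A hA
        obtain ⟨B, hB, hAB⟩ := ih2.2.2 X A hA
        obtain ⟨C, hC, hBC⟩ := ih1.2.2 X B hB
        exact ⟨C, hC, hAB.trans hBC⟩
  · intro U V T R a b _ _
    exact ⟨⟨fun X A hA => by simp at hA, fun X A hA => by simp at hA⟩,
           ⟨fun X A hA => by simp at hA, fun X A hA => by simp at hA⟩⟩
  · intro U V X a _
    constructor
    · exact ⟨fun Y A hA => by
        injection hA with h1 h2; subst h1; subst h2; exact ⟨V, rfl, a⟩,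
        fun Y A hA => by simp at hA⟩
    · exact ⟨fun Y A hA => by
        injection hA with h1 h2; subst h1; subst h2; exact ⟨U, rfl, a.symm⟩,
        fun Y A hA => by simp at hA⟩
  · intro U V X a _
    constructor
    · exact ⟨fun Y A hA => by simp at hA,
        fun Y A hA => by
        injection hA with h1 h2; subst h1; subst h2; exact ⟨V, rfl, a⟩⟩
    · exact ⟨fun Y A hA => by simp at hA,
        fun Y A hA => by
        injection hA with h1 h2; subst h1; subst h2; exact ⟨U, rfl, a.symm⟩⟩
  all_goals intros; trivial

inductive SpineFresh {S : Type} (F : Set (Bool × ℕ)) : UTy S → Prop where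
  | arrow : SpineFresh F (.arrow U T)
  | fallU : (false, X) ∉ F → SpineFresh F U → SpineFresh F (.fallU X U)
  | fallG : (true, X) ∉ F → SpineFresh F U → SpineFresh F (.fallG X U)

theorem spinefresh_uequiv {S : Type} [CommRing S] {U V : UTy S} (h : UEquiv U V)
    (F : Set (Bool × ℕ)) : SpineFresh F U ↔ SpineFresh F V := by
  refine @UEquiv.rec S _ (fun U V _ => SpineFresh F U ↔ SpineFresh F V) (fun _ _ _ => True)
    ?_ ?_ ?_ ?_ ?_ ?_ ?_ ?_ ?_ ?_ ?_ ?_ ?_ ?_ ?_ ?_ ?_ ?_ ?_ _ _ h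
  · intro U; rfl
  · intro U V a ih; exact ih.symm
  · intro U V W a b ih1 ih2; exact ih1.trans ih2
  · intro U V T R a b _ _; exact ⟨fun _ => .arrow, fun _ => .arrow⟩
  · intro U V X a ih
    constructor
    · rintro (_ | ⟨hX, hU⟩); exact .fallU hX (ih.mp hU)
    · rintro (_ | ⟨hX, hU⟩); exact .fallU hX (ih.mpr hU)
  · intro U V X a ih
    constructor
    · rintro (_ | _ | ⟨hX, hU⟩); exact .fallG hX (ih.mp hU)
    · rintro (_ | _ | ⟨hX, hU⟩); exact .fallG hX (ih.mpr hU)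
  all_goals intros; trivial

theorem spinefresh_substU {S : Type} {F : Set (Bool × ℕ)} {U : UTy S}
    (h : SpineFresh F U) (Y : ℕ) (A : UTy S) : SpineFresh F (U.substU Y A) := by
  induction h with
  | arrow => exact .arrow
  | @fallU X U hX hU ih =>
    by_cases hxy : X = Y
    · simp only [UTy.substU, if_pos hxy]; exact .fallU hX hU
    · simp only [UTy.substU, if_neg hxy]; exact .fallU hX ih
  | @fallG X U hX hU ih => exact .fallG hX ih

theorem spinefresh_substG {S : Type} {F : Set (Bool × ℕ)} {U : UTy S}
    (h : SpineFresh F U) (Y : ℕ) (A : Ty S) : SpineFresh F (U.substG Y A) := by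
  induction h with
  | arrow => exact .arrow
  | @fallU X U hX hU ih => exact .fallU hX ih
  | @fallG X U hX hU ih =>
    by_cases hxy : X = Y
    · simp only [UTy.substG, if_pos hxy]; exact .fallG hX hU
    · simp only [UTy.substG, if_neg hxy]; exact .fallG hX ih

theorem spinefresh_mkForall {S : Type} {F : Set (Bool × ℕ)} {U : UTy S} (X : Bool × ℕ)
    (hX : X ∉ F) (h : SpineFresh F U) : SpineFresh F (mkForall X U) := by
  obtain ⟨b, n⟩ := X
  cases b
  · exact .fallU hX h
  · exact .fallG hX h
theorem combo_sum_aux {S : Type} [CommRing S] {Q : Ty S → Prop} :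
    ∀ L : List (S × Ty S), L ≠ [] →
    (∀ p ∈ L, ∃ Lp : List (S × Ty S), Lp ≠ [] ∧ TEquiv p.2 (combo Lp) ∧ weightOf Lp = 1 ∧
      ∀ q ∈ Lp, Q q.2) →
    ∃ L' : List (S × Ty S), L' ≠ [] ∧ TEquiv (combo L) (combo L') ∧
      weightOf L' = weightOf L ∧ ∀ q ∈ L', Q q.2 := by
  intro L
  induction L with
  | nil => intro h; exact absurd rfl h
  | cons p L' ih =>
    intro _ hall
    obtain ⟨Lp, hLp, hEq, hw, hQ⟩ := hall p (by simp)
    have hscaled : TEquiv (.smul p.1 p.2) (combo (Lp.map fun q => (p.1 * q.1, q.2))) :=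
      (TEquiv.smul hEq).trans (tequiv_combo_smul p.1 Lp hLp).symm
    have hwsc : weightOf (Lp.map fun q => (p.1 * q.1, q.2)) = p.1 := by
      simp only [weightOf, List.map_map, Function.comp_def]
      rw [List.sum_map_mul_left]
      have : (Lp.map fun q : S × Ty S => q.1).sum = 1 := by
        simpa [weightOf] using hw
      rw [this, mul_one]
    have hQsc : ∀ q ∈ Lp.map fun q => (p.1 * q.1, q.2), Q q.2 := by
      intro q hq
      obtain ⟨r, hr, rfl⟩ := List.mem_map.mp hq
      exact hQ r hr
    have hne : (Lp.map fun q => (p.1 * q.1, q.2)) ≠ [] := by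
      simp [List.map_eq_nil_iff, hLp]
    cases L' with
    | nil =>
      refine ⟨Lp.map fun q => (p.1 * q.1, q.2), hne, ?_, ?_, hQsc⟩
      · exact hscaled
      · rw [hwsc]; simp [weightOf]
    | cons r M =>
      obtain ⟨L'', hL''ne, hL''eq, hL''w, hL''Q⟩ := ih (by simp) (fun q hq => hall q (by simp [hq]))
      refine ⟨(Lp.map fun q => (p.1 * q.1, q.2)) ++ L'', by simp [hne], ?_, ?_, ?_⟩
      · rw [combo_cons p (r :: M) (by simp)]
        exact (tequiv_add_congr hscaled hL''eq).trans
          (tequiv_combo_append _ _ hne hL''ne).symm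
      · rw [weightOf_append, hwsc, hL''w]; simp [weightOf]
      · intro q hq
        rcases List.mem_append.mp hq with h | h
        · exact hQsc q h
        · exact hL''Q q h
theorem applySub_unit {S : Type} (U : UTy S) (s : TSub S) :
    (Ty.unit U).applySub s = Ty.unit (U.applySub s) := by
  cases s <;> rfl

theorem preceq_tequiv {S : Type} [CommRing S] {Γ : Ctx S} {A B : Ty S} (h : TEquiv A B) :
    Preceq Γ ∅ A B :=
  Preceq.equiv (Set.empty_inter _) h

theorem preceq_forallI {S : Type} [CommRing S] {Γ : Ctx S} {X : Bool × ℕ} (hX : X ∉ Γ.fv)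
    (U : UTy S) : Preceq Γ (∅ ∪ {X}) (Ty.unit U) (Ty.unit (mkForall X U)) :=
  Preceq.prec (Set.empty_inter _)
    (Prec.intro X [(1, U)] hX (by simp) (TEquiv.one_smul _).symm (TEquiv.one_smul _).symm)

theorem preceq_forallE {S : Type} [CommRing S] {Γ : Ctx S} {s : TSub S} (hX : s.var ∉ Γ.fv)
    (U : UTy S) :
    Preceq Γ (∅ ∪ {s.var}) (Ty.unit (mkForall s.var U)) ((Ty.unit U).applySub s) :=
  Preceq.prec (Set.empty_inter _)
    (Prec.elim s [(1, U)] hX (by simp) (TEquiv.one_smul _).symm (TEquiv.one_smul _).symm)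

def Ent {S : Type} [CommRing S] (Γ : Ctx S) (x : ℕ) (t : Term S) (P : Ty S) : Prop :=
  ∃ (U : UTy S) (R : Ty S) (𝒱 : Set (Bool × ℕ)) (W : UTy S),
    TEquiv P (Ty.unit W) ∧ SpineFresh Γ.fv W ∧ Types (Γ.update x U) t R ∧
    Preceq Γ 𝒱 (Ty.unit (.arrow U R)) (Ty.unit W)

inductive Wraps {S : Type} [CommRing S] (x : ℕ) (t : Term S) : Term S → Prop where
  | base : Wraps x t (.lam x t)
  | smul {u : Term S} : Wraps x t u → Wraps x t (.smul 1 u)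
theorem gen_main {S : Type} [CommRing S] (Γ : Ctx S) (x : ℕ) (t : Term S) :
    ∀ n (u : Term S) (T : Ty S), TypesN n Γ u T → Wraps x t u →
    ∃ L : List (S × Ty S), L ≠ [] ∧ TEquiv T (combo L) ∧ weightOf L = 1 ∧
      ∀ p ∈ L, Ent Γ x t p.2 := by
  intro n
  induction n using Nat.strong_induction_on with
  | _ n ih =>
    intro u T h hw
    cases h with
    | ax hx => cases hw
    | @equiv n' _ _ T₀ T₁ prem hTE =>
      obtain ⟨L, hne, hEq, hw1, hEnt⟩ := ih n' (by omega) u T₀ prem hw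
      exact ⟨L, hne, hTE.symm.trans hEq, hw1, hEnt⟩
    | @arrI n' t' T₀ _ x' U prem =>
      cases hw with
      | base =>
        refine ⟨[(1, Ty.unit (.arrow U T₀))], by simp, (TEquiv.one_smul _).symm, by simp [weightOf], ?_⟩
        intro p hp
        simp only [List.mem_singleton] at hp
        subst hp
        exact ⟨U, T₀, ∅, .arrow U T₀, TEquiv.refl _, .arrow, ⟨n', prem⟩,
          preceq_tequiv (TEquiv.refl _)⟩
    | arrE Xs U L M hL hM hvar prem1 prem2 => cases hw
    | @fallI n' _ _ M X hMne hX prem =>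
      obtain ⟨L', hne, hEq, hw1, hEnt⟩ := ih n' (by omega) u _ prem hw
      have hwL' : ∀ q ∈ L', q.2.weight = 1 := by
        intro q hq
        obtain ⟨U, R, 𝒱, W, hqe, _, _, _⟩ := hEnt q hq
        rw [weight_tequiv hqe]; rfl
      have hsum : weightOf (M.map fun p => (p.1, Ty.unit (mkForall X p.2))) = 1 := by
        have h1 : (combo (M.map fun p => (p.1, Ty.unit p.2))).weight = (combo L').weight :=
          weight_tequiv hEq
        rw [weight_combo _ (by simp [hMne]), weight_combo _ hne] at h1
        rw [List.map_congr_left (fun q hq => by rw [hwL' q hq, mul_one] :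
          ∀ q ∈ L', q.1 * q.2.weight = q.1)] at h1
        simp only [List.map_map, Function.comp_def, Ty.weight, mul_one] at h1
        simp only [weightOf, List.map_map, Function.comp_def]
        rw [h1]
        simpa [weightOf] using hw1
      refine ⟨M.map fun p => (p.1, Ty.unit (mkForall X p.2)), by simp [hMne],
        TEquiv.refl _, hsum, ?_⟩
      intro p hp
      obtain ⟨m, hm, rfl⟩ := List.mem_map.mp hp
      have hA := nf_mem_ne_none M m hm
      rw [nf_sound hEq] at hA
      obtain ⟨q, hqmem, hqn⟩ := nf_combo_none_ex L' hne _ hA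
      obtain ⟨U, R, 𝒱, W, hqe, hsfW, hty, hpre⟩ := hEnt q hqmem
      rw [nf_sound hqe] at hqn
      have hUW : UEquiv m.2 W := Quotient.exact (Sum.inl.inj (nf_unit_eq W _ hqn))
      refine ⟨U, R, (𝒱 ∪ ∅) ∪ (∅ ∪ {X}), mkForall X m.2, TEquiv.refl _,
        spinefresh_mkForall X hX ((spinefresh_uequiv hUW Γ.fv).mpr hsfW), hty, ?_⟩
      exact Preceq.trans (Preceq.trans hpre (preceq_tequiv (TEquiv.unit hUW.symm)))
        (preceq_forallI hX m.2)
    | @fallE n' _ _ M s hMne prem =>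
      obtain ⟨L', hne, hEq, hw1, hEnt⟩ := ih n' (by omega) u _ prem hw
      have hwL' : ∀ q ∈ L', q.2.weight = 1 := by
        intro q hq
        obtain ⟨U, R, 𝒱, W, hqe, _, _, _⟩ := hEnt q hq
        rw [weight_tequiv hqe]; rfl
      have hsum : weightOf (M.map fun p => (p.1, (Ty.unit p.2).applySub s)) = 1 := by
        have h1 : (combo (M.map fun p => (p.1, Ty.unit (mkForall s.var p.2)))).weight
            = (combo L').weight := weight_tequiv hEq
        rw [weight_combo _ (by simp [hMne]), weight_combo _ hne] at h1
        rw [List.map_congr_left (fun q hq => by rw [hwL' q hq, mul_one] :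
          ∀ q ∈ L', q.1 * q.2.weight = q.1)] at h1
        simp only [List.map_map, Function.comp_def, Ty.weight, mul_one] at h1
        simp only [weightOf, List.map_map, Function.comp_def]
        rw [show (fun p : S × UTy S => ((p.1, (Ty.unit p.2).applySub s) : S × Ty S).1)
          = fun p : S × UTy S => p.1 from rfl]
        rw [h1]
        simpa [weightOf] using hw1
      refine ⟨M.map fun p => (p.1, (Ty.unit p.2).applySub s), by simp [hMne],
        TEquiv.refl _, hsum, ?_⟩
      intro p hp
      obtain ⟨m, hm, rfl⟩ := List.mem_map.mp hp
      have hA : NF (combo (M.map fun p => (p.1, Ty.unit (mkForall s.var p.2))))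
          (Sum.inl (uq (mkForall s.var m.2))) ≠ none := by
        have := nf_mem_ne_none (M.map fun p => (p.1, mkForall s.var p.2))
          (m.1, mkForall s.var m.2) (List.mem_map_of_mem hm)
        simpa [List.map_map, Function.comp_def] using this
      rw [nf_sound hEq] at hA
      obtain ⟨q, hqmem, hqn⟩ := nf_combo_none_ex L' hne _ hA
      obtain ⟨U, R, 𝒱, W, hqe, hsfW, hty, hpre⟩ := hEnt q hqmem
      rw [nf_sound hqe] at hqn
      have hUW : UEquiv (mkForall s.var m.2) W :=
        Quotient.exact (Sum.inl.inj (nf_unit_eq W _ hqn))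
      cases s with
      | u Y A =>
        obtain ⟨B, rfl, hmB⟩ := (uequiv_fall_inv hUW).1.1 Y m.2 rfl
        have hYfresh : ((false, Y) : Bool × ℕ) ∉ Γ.fv := by
          cases hsfW with
          | fallU hY _ => exact hY
        have hsfB : SpineFresh Γ.fv B := by
          cases hsfW with
          | fallU _ hB => exact hB
        have hsfm : SpineFresh Γ.fv m.2 := (spinefresh_uequiv hmB Γ.fv).mpr hsfB
        refine ⟨U, R, (𝒱 ∪ ∅) ∪ (∅ ∪ {TSub.var (.u Y A)}), m.2.substU Y A, TEquiv.refl _,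
          spinefresh_substU hsfm Y A, hty, ?_⟩
        refine Preceq.trans (Preceq.trans hpre
          (preceq_tequiv (TEquiv.unit (UEquiv.fallU hmB).symm))) ?_
        exact preceq_forallE (s := .u Y A) hYfresh m.2
      | g Y A =>
        obtain ⟨B, rfl, hmB⟩ := (uequiv_fall_inv hUW).1.2 Y m.2 rfl
        have hYfresh : ((true, Y) : Bool × ℕ) ∉ Γ.fv := by
          cases hsfW with
          | fallG hY _ => exact hY
        have hsfB : SpineFresh Γ.fv B := by
          cases hsfW with
          | fallG _ hB => exact hB
        have hsfm : SpineFresh Γ.fv m.2 := (spinefresh_uequiv hmB Γ.fv).mpr hsfB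
        refine ⟨U, R, (𝒱 ∪ ∅) ∪ (∅ ∪ {TSub.var (.g Y A)}), m.2.substG Y A, TEquiv.refl _,
          spinefresh_substG hsfm Y A, hty, ?_⟩
        refine Preceq.trans (Preceq.trans hpre
          (preceq_tequiv (TEquiv.unit (UEquiv.fallG hmB).symm))) ?_
        exact preceq_forallE (s := .g Y A) hYfresh m.2
    | addI prem1 prem2 => cases hw
    | @oneE n' _ _ _ prem => exact ih n' (by omega) _ T prem (Wraps.smul hw)
    | @sum _ _ L₀ hne hall =>
      generalize hww : weightOf (List.map Prod.snd L₀) = w at hw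
      cases hw with
      | smul hw' =>
        obtain ⟨L', hL'ne, hL'eq, hL'w, hL'Q⟩ :=
          combo_sum_aux (Q := Ent Γ x t) (L₀.map Prod.snd) (by simp [hne]) (by
            intro p hp
            obtain ⟨q, hq, rfl⟩ := List.mem_map.mp hp
            exact ih q.1
              (Nat.lt_succ_of_le
                (List.single_le_sum (fun _ _ => Nat.zero_le _) _ (List.mem_map_of_mem (f := Prod.fst) hq)))
              _ q.2.2 (hall q hq) hw')
        exact ⟨L', hL'ne, hL'eq, by rw [hL'w, hww], hL'Q⟩
/- STATEMENT 10: Generation lemma for abstractions -/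
theorem generation_abstractions {S : Type} [CommRing S]
    (Γ : Ctx S) (x : ℕ) (t : Term S) (T : Ty S)
    (h : Types Γ (.lam x t) T) :
    ∃ L : List (S × Ty S), L ≠ [] ∧
      TEquiv T (combo L) ∧ weightOf L = 1 ∧
      ∀ p ∈ L, ∃ (U : UTy S) (R : Ty S) (𝒱 : Set (Bool × ℕ)),
        Types (Γ.update x U) t R ∧
        Preceq Γ 𝒱 (Ty.unit (.arrow U R)) p.2 := by
  obtain ⟨n, hn⟩ := h
  obtain ⟨L, hne, hEq, hw1, hEnt⟩ := gen_main Γ x t n _ T hn Wraps.base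
  refine ⟨L, hne, hEq, hw1, ?_⟩
  intro p hp
  obtain ⟨U, R, 𝒱, W, hpe, _, hty, hpre⟩ := hEnt p hp
  exact ⟨U, R, 𝒱 ∪ ∅, hty, Preceq.trans hpre (preceq_tequiv hpe.symm)⟩
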